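/- Let E be a real normed space. The map ξ ↦ N^ξ is a bijection from the set of convex Katětov functions on E onto the set of seminorms N on E × ℝ satisfying N(a, 0) = ‖a‖ for all a ∈ E; its inverse sends such a seminorm N to the function a ↦ N(a, 1). In particular, for every seminorm N on E × ℝ with N(a,0) = ‖a‖ for all a ∈ E, the function a ↦ N(a, 1) is a convex Katětov function on E. -/

import Mathlib

/-- A function `ξ` on a metric space is *Katětov* if `|ξ x - ξ y| ≤ d(x,y)` and
`d(x,y) ≤ ξ x + ξ y` for all `x, y`. -/
def IsKatetov {X : Type*} [MetricSpace X] (ξ : X → ℝ) : Prop :=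
  ∀ x y : X, |ξ x - ξ y| ≤ dist x y ∧ dist x y ≤ ξ x + ξ y

/-- A seminorm (as a bare function): absolutely homogeneous and subadditive. -/
def IsSeminorm {V : Type*} [AddCommGroup V] [Module ℝ V] (N : V → ℝ) : Prop :=
  (∀ (t : ℝ) (v : V), N (t • v) = |t| * N v) ∧ ∀ v w : V, N (v + w) ≤ N v + N w

/-- The function `N^ξ` on `E × ℝ`, where `(a, α)` encodes the vector `αx - a` of `E ⊕ ℝx`:
`N^ξ (a, α) = |α| ξ(a/α)` for `α ≠ 0`, and `N^ξ (a, 0) = ‖a‖`. -/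
noncomputable def katetovSeminorm {E : Type*} [NormedAddCommGroup E] [NormedSpace ℝ E]
    (ξ : E → ℝ) (v : E × ℝ) : ℝ :=
  if v.2 = 0 then ‖v.1‖ else |v.2| * ξ (v.2⁻¹ • v.1)

section Aux

variable {E : Type*} [NormedAddCommGroup E] [NormedSpace ℝ E]

lemma kS_mk_ne {ξ : E → ℝ} {a : E} {α : ℝ} (hα : α ≠ 0) :
    katetovSeminorm ξ (a, α) = |α| * ξ (α⁻¹ • a) := by
  simp [katetovSeminorm, hα]

lemma kS_mk_zero (ξ : E → ℝ) (a : E) : katetovSeminorm ξ (a, 0) = ‖a‖ := by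
  simp [katetovSeminorm]

lemma kS_smul (ξ : E → ℝ) (t : ℝ) (v : E × ℝ) :
    katetovSeminorm ξ (t • v) = |t| * katetovSeminorm ξ v := by
  obtain ⟨a, α⟩ := v
  rcases eq_or_ne t 0 with rfl | ht
  · simp [katetovSeminorm]
  rcases eq_or_ne α 0 with rfl | hα
  · simp [katetovSeminorm, ht, norm_smul, Real.norm_eq_abs]
  · have hta : t * α ≠ 0 := mul_ne_zero ht hα
    have h1 : (t • (a, α) : E × ℝ) = (t • a, t * α) := rfl
    rw [h1, kS_mk_ne hta, kS_mk_ne hα, abs_mul]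
    have h2 : (t * α)⁻¹ • t • a = α⁻¹ • a := by
      rw [smul_smul, mul_inv_rev, mul_assoc, inv_mul_cancel₀ ht, mul_one]
    rw [h2]; ring

lemma kS_lip {ξ : E → ℝ} (hk : IsKatetov ξ) (a b : E) {β : ℝ} (hβ : β ≠ 0) :
    katetovSeminorm ξ (a + b, β) ≤ ‖a‖ + katetovSeminorm ξ (b, β) := by
  rw [kS_mk_ne hβ, kS_mk_ne hβ]
  have h := (hk (β⁻¹ • (a + b)) (β⁻¹ • b)).1
  rw [dist_eq_norm] at h
  have h1 : β⁻¹ • (a + b) - β⁻¹ • b = β⁻¹ • a := by rw [smul_add]; abel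
  rw [h1, norm_smul, Real.norm_eq_abs, abs_inv] at h
  have h2 := (abs_le.mp h).2
  have h3 : |β| * ξ (β⁻¹ • (a + b)) ≤ |β| * (ξ (β⁻¹ • b) + |β|⁻¹ * ‖a‖) :=
    mul_le_mul_of_nonneg_left (by linarith) (abs_nonneg β)
  have hb : |β| ≠ 0 := abs_ne_zero.mpr hβ
  have h4 : |β| * (|β|⁻¹ * ‖a‖) = ‖a‖ := by field_simp
  nlinarith [h3]

lemma subadd_aux {ξ : E → ℝ} (hk : IsKatetov ξ) (hc : ConvexOn ℝ Set.univ ξ)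
    {a b : E} {α β : ℝ} (hα : 0 < α) (hβ : β ≠ 0) (hγ : 0 < α + β) :
    (α + β) * ξ ((α + β)⁻¹ • (a + b)) ≤ α * ξ (α⁻¹ • a) + |β| * ξ (β⁻¹ • b) := by
  set γ := α + β with hγdef
  set x := α⁻¹ • a with hx
  set y := β⁻¹ • b with hy
  have ha : a = α • x := by rw [hx, smul_smul, mul_inv_cancel₀ hα.ne', one_smul]
  have hb : b = β • y := by rw [hy, smul_smul, mul_inv_cancel₀ hβ, one_smul]
  have hzγ : γ⁻¹ • (a + b) = (γ⁻¹ * α) • x + (γ⁻¹ * β) • y := by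
    rw [ha, hb, smul_add]; simp only [smul_smul]
  rcases lt_or_gt_of_ne hβ with hβn | hβp
  · -- β < 0 : Katetov case
    have hc' : (0:ℝ) < -β / γ := div_pos (neg_pos.mpr hβn) hγ
    set c : ℝ := -β / γ with hcdef
    have hz : γ⁻¹ • (a + b) = x + c • (x - y) := by
      rw [hzγ, smul_sub]
      have h1 : (γ⁻¹ * α) = 1 + c := by
        rw [hcdef]; linear_combination mul_inv_cancel₀ hγ.ne' - γ⁻¹ * hγdef
      have h2 : (γ⁻¹ * β) = -c := by rw [hcdef]; ring
      rw [h1, h2, add_smul, one_smul, neg_smul]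
      abel
    set z := γ⁻¹ • (a + b) with hzdef
    have h1 : ξ z - ξ x ≤ c * ‖x - y‖ := by
      have h0 := (hk z x).1
      rw [dist_eq_norm] at h0
      have hzx : z - x = c • (x - y) := by rw [hz]; abel
      rw [hzx, norm_smul, Real.norm_eq_abs, abs_of_pos hc'] at h0
      exact (abs_le.mp h0).2
    have h2 : ‖x - y‖ ≤ ξ x + ξ y := by
      have := (hk x y).2; rwa [dist_eq_norm] at this
    have h3 : ξ z ≤ ξ x + c * (ξ x + ξ y) := by nlinarith [hc'.le]
    have h4 := mul_le_mul_of_nonneg_left h3 hγ.le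
    have key : γ * (ξ x + c * (ξ x + ξ y)) = α * ξ x + (-β) * ξ y := by
      rw [hcdef]; field_simp; ring
    rw [abs_of_neg hβn]; linarith
  · -- β > 0 : convexity
    have ht : (0:ℝ) ≤ γ⁻¹ * α := by positivity
    have hs : (0:ℝ) ≤ γ⁻¹ * β := by positivity
    have hts : γ⁻¹ * α + γ⁻¹ * β = 1 := by
      linear_combination mul_inv_cancel₀ hγ.ne' - γ⁻¹ * hγdef
    have h5 := hc.2 (Set.mem_univ x) (Set.mem_univ y) ht hs hts
    rw [← hzγ] at h5
    simp only [smul_eq_mul] at h5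
    have h4 := mul_le_mul_of_nonneg_left h5 hγ.le
    have key : γ * ((γ⁻¹ * α) * ξ x + (γ⁻¹ * β) * ξ y) = α * ξ x + β * ξ y := by
      field_simp
    rw [abs_of_pos hβp]; linarith

lemma kS_add_pos {ξ : E → ℝ} (hk : IsKatetov ξ) (hc : ConvexOn ℝ Set.univ ξ)
    {a b : E} {α β : ℝ} (hα : α ≠ 0) (hβ : β ≠ 0) (hγ : 0 < α + β) :
    katetovSeminorm ξ (a + b, α + β) ≤ katetovSeminorm ξ (a, α) + katetovSeminorm ξ (b, β) := by
  rw [kS_mk_ne hγ.ne', kS_mk_ne hα, kS_mk_ne hβ, abs_of_pos hγ]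
  rcases lt_or_gt_of_ne hα with hαn | hαp
  · have hβp : 0 < β := by linarith
    have h := subadd_aux hk hc (a := b) (b := a) hβp hα (by linarith)
    rw [add_comm α β, add_comm a b, abs_of_pos hβp]
    linarith
  · have h := subadd_aux hk hc (a := a) (b := b) hαp hβ hγ
    rw [abs_of_pos hαp]
    linarith

lemma kS_add {ξ : E → ℝ} (hk : IsKatetov ξ) (hc : ConvexOn ℝ Set.univ ξ)
    (v w : E × ℝ) :
    katetovSeminorm ξ (v + w) ≤ katetovSeminorm ξ v + katetovSeminorm ξ w := by
  obtain ⟨a, α⟩ := v; obtain ⟨b, β⟩ := w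
  have hvw : ((a, α) + (b, β) : E × ℝ) = (a + b, α + β) := rfl
  rw [hvw]
  rcases eq_or_ne α 0 with rfl | hα
  · rcases eq_or_ne β 0 with rfl | hβ
    · simp only [add_zero, kS_mk_zero]
      exact norm_add_le a b
    · rw [zero_add, kS_mk_zero]
      exact kS_lip hk a b hβ
  · rcases eq_or_ne β 0 with rfl | hβ
    · rw [add_zero, kS_mk_zero]
      have h := kS_lip hk b a hα
      rw [add_comm b a] at h
      linarith
    · rcases lt_trichotomy (α + β) 0 with hγ | hγ | hγ
      · -- negate everything
        have hγ' : 0 < -α + -β := by linarith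
        have h := kS_add_pos hk hc (a := -a) (b := -b)
          (neg_ne_zero.mpr hα) (neg_ne_zero.mpr hβ) hγ'
        have e1 : ((-a + -b : E), -α + -β) = (-1 : ℝ) • ((a + b, α + β) : E × ℝ) := by
          simp only [Prod.ext_iff, Prod.smul_fst, Prod.smul_snd, Prod.fst, Prod.snd]
          constructor
          · show -a + -b = (-1 : ℝ) • (a + b); rw [neg_one_smul]; abel
          · show -α + -β = (-1 : ℝ) • (α + β); simp; ring
        have e2 : ((-a : E), -α) = (-1 : ℝ) • ((a, α) : E × ℝ) := by
          simp [Prod.ext_iff]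
        have e3 : ((-b : E), -β) = (-1 : ℝ) • ((b, β) : E × ℝ) := by
          simp [Prod.ext_iff]
        rw [e1, e2, e3, kS_smul, kS_smul, kS_smul] at h
        simpa using h
      · -- α + β = 0
        have hβα : β = -α := by linarith
        rw [hγ, kS_mk_zero, kS_mk_ne hα, kS_mk_ne hβ]
        have h := (hk (α⁻¹ • a) (β⁻¹ • b)).2
        rw [dist_eq_norm] at h
        have h1 : α⁻¹ • a - β⁻¹ • b = α⁻¹ • (a + b) := by
          rw [hβα, inv_neg, neg_smul, smul_add]; abel
        rw [h1, norm_smul, Real.norm_eq_abs, abs_inv] at h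
        have habs : |β| = |α| := by rw [hβα, abs_neg]
        have hα' : (0:ℝ) < |α| := abs_pos.mpr hα
        rw [habs]
        have h2 := mul_le_mul_of_nonneg_left h hα'.le
        rw [← mul_assoc, mul_inv_cancel₀ hα'.ne', one_mul] at h2
        linarith [mul_add (|α|) (ξ (α⁻¹ • a)) (ξ (β⁻¹ • b)), h2]
      · exact kS_add_pos hk hc hα hβ hγ

lemma kS_back {N : E × ℝ → ℝ} (hN : IsSeminorm N) (h0 : ∀ a : E, N (a, 0) = ‖a‖) :
    IsKatetov (fun a : E => N (a, 1)) ∧ ConvexOn ℝ Set.univ (fun a : E => N (a, 1)) := by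
  obtain ⟨hhom, hadd⟩ := hN
  constructor
  · intro x y
    constructor
    · rw [abs_sub_le_iff, dist_eq_norm]
      constructor
      · show N (x, 1) - N (y, 1) ≤ ‖x - y‖
        have h1 : ((x : E), (1:ℝ)) = (y, 1) + (x - y, 0) := by
          simp [Prod.ext_iff]
        have h2 : N (x, 1) ≤ N (y, 1) + ‖x - y‖ := by
          calc N (x, 1) = N ((y, 1) + (x - y, 0)) := by rw [← h1]
            _ ≤ N (y, 1) + N (x - y, 0) := hadd _ _
            _ = N (y, 1) + ‖x - y‖ := by rw [h0]
        linarith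
      · show N (y, 1) - N (x, 1) ≤ ‖x - y‖
        have h1 : ((y : E), (1:ℝ)) = (x, 1) + (y - x, 0) := by
          simp [Prod.ext_iff]
        have h2 : N (y, 1) ≤ N (x, 1) + ‖x - y‖ := by
          calc N (y, 1) = N ((x, 1) + (y - x, 0)) := by rw [← h1]
            _ ≤ N (x, 1) + N (y - x, 0) := hadd _ _
            _ = N (x, 1) + ‖x - y‖ := by rw [h0, norm_sub_rev]
        linarith
    · rw [dist_eq_norm, ← h0 (x - y)]
      have h1 : ((x - y : E), (0:ℝ)) = (x, 1) + (-1 : ℝ) • ((y : E), (1:ℝ)) := by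
        simp [Prod.ext_iff, sub_eq_add_neg]
      calc N (x - y, 0) = N ((x, 1) + (-1 : ℝ) • ((y : E), (1:ℝ))) := by rw [← h1]
        _ ≤ N (x, 1) + N ((-1 : ℝ) • ((y : E), (1:ℝ))) := hadd _ _
        _ = N (x, 1) + N (y, 1) := by rw [hhom]; simp
  · refine ⟨convex_univ, ?_⟩
    intro x _ y _ t s ht hs hts
    have h1 : ((t • x + s • y : E), (1:ℝ)) = t • ((x : E), (1:ℝ)) + s • ((y : E), (1:ℝ)) := by
      simp [Prod.ext_iff]; linarith
    calc N (t • x + s • y, 1) = N (t • ((x : E), (1:ℝ)) + s • ((y : E), (1:ℝ))) := by rw [h1]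
      _ ≤ N (t • ((x : E), (1:ℝ))) + N (s • ((y : E), (1:ℝ))) := hadd _ _
      _ = |t| * N (x, 1) + |s| * N (y, 1) := by rw [hhom, hhom]
      _ = t * N (x, 1) + s * N (y, 1) := by rw [abs_of_nonneg ht, abs_of_nonneg hs]

end Aux

/-- The map `ξ ↦ N^ξ` is a bijection from the convex Katětov functions on `E` onto the
seminorms on `E × ℝ` extending the norm of `E`, with inverse `N ↦ (a ↦ N (a, 1))`.
In particular, `a ↦ N (a, 1)` is a convex Katětov function for every such seminorm `N`. -/
theorem katetovSeminorm_bijective {E : Type*} [NormedAddCommGroup E] [NormedSpace ℝ E] :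
    Set.BijOn (katetovSeminorm (E := E))
        {ξ : E → ℝ | IsKatetov ξ ∧ ConvexOn ℝ Set.univ ξ}
        {N : E × ℝ → ℝ | IsSeminorm N ∧ ∀ a : E, N (a, 0) = ‖a‖} ∧
    Set.InvOn (fun N : E × ℝ → ℝ => fun a : E => N (a, 1)) (katetovSeminorm (E := E))
        {ξ : E → ℝ | IsKatetov ξ ∧ ConvexOn ℝ Set.univ ξ}
        {N : E × ℝ → ℝ | IsSeminorm N ∧ ∀ a : E, N (a, 0) = ‖a‖} ∧
    ∀ N : E × ℝ → ℝ, IsSeminorm N → (∀ a : E, N (a, 0) = ‖a‖) →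
      IsKatetov (fun a : E => N (a, 1)) ∧ ConvexOn ℝ Set.univ (fun a : E => N (a, 1)) := by
  have hmaps : Set.MapsTo (katetovSeminorm (E := E))
      {ξ : E → ℝ | IsKatetov ξ ∧ ConvexOn ℝ Set.univ ξ}
      {N : E × ℝ → ℝ | IsSeminorm N ∧ ∀ a : E, N (a, 0) = ‖a‖} := by
    rintro ξ ⟨hk, hc⟩
    exact ⟨⟨kS_smul ξ, kS_add hk hc⟩, kS_mk_zero ξ⟩
  have hmaps' : Set.MapsTo (fun N : E × ℝ → ℝ => fun a : E => N (a, 1))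
      {N : E × ℝ → ℝ | IsSeminorm N ∧ ∀ a : E, N (a, 0) = ‖a‖}
      {ξ : E → ℝ | IsKatetov ξ ∧ ConvexOn ℝ Set.univ ξ} := by
    rintro N ⟨hN, h0⟩
    exact kS_back hN h0
  have hinv : Set.InvOn (fun N : E × ℝ → ℝ => fun a : E => N (a, 1)) (katetovSeminorm (E := E))
      {ξ : E → ℝ | IsKatetov ξ ∧ ConvexOn ℝ Set.univ ξ}
      {N : E × ℝ → ℝ | IsSeminorm N ∧ ∀ a : E, N (a, 0) = ‖a‖} := by
    constructor
    · rintro ξ ⟨_, _⟩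
      funext a
      show katetovSeminorm ξ (a, 1) = ξ a
      rw [kS_mk_ne one_ne_zero]
      simp
    · rintro N ⟨⟨hhom, _⟩, h0⟩
      funext v
      obtain ⟨a, α⟩ := v
      rcases eq_or_ne α 0 with rfl | hα
      · simp only [kS_mk_zero]
        exact (h0 a).symm
      · rw [kS_mk_ne hα]
        have h1 : (α • ((α⁻¹ • a : E), (1:ℝ))) = ((a : E), α) := by
          simp [Prod.ext_iff, smul_smul, mul_inv_cancel₀ hα]
        calc |α| * N (α⁻¹ • a, 1) = N (α • ((α⁻¹ • a : E), (1:ℝ))) := (hhom α _).symm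
          _ = N (a, α) := by rw [h1]
  exact ⟨hinv.bijOn hmaps hmaps', hinv, fun N hN h0 => kS_back hN h0⟩
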